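/- For all integers m,n ≥ 1, let T be an edge set of the grid graph L on {0,…,m}×{0,…,n} that is a spanning tree of L, contains all boundary edges B, and does not belong to Γ̄. Then there exist interior vertices v* and v_* such that |T ∩ E_{v*}| = 2 and |T ∩ E_{v_*}| = 0. -/

import Mathlib

open scoped Classical

noncomputable section

/-- Vertices of the grid on `{0,…,m} × {0,…,n}`. -/
abbrev GridV (m n : ℕ) := Fin (m + 1) × Fin (n + 1)

/-- The grid graph on `{0,…,m} × {0,…,n}`: two vertices are adjacent iff they differ by 1
in exactly one coordinate. -/
def gridL (m n : ℕ) : SimpleGraph (GridV m n) :=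
  SimpleGraph.fromRel fun v w =>
    (v.1 = w.1 ∧ v.2.val + 1 = w.2.val) ∨ (v.2 = w.2 ∧ v.1.val + 1 = w.1.val)

/-- The set `B` of boundary edges: the bottom-row edges together with the
right-column edges. -/
def boundaryB (m n : ℕ) : Finset (Sym2 (GridV m n)) :=
  ((Finset.univ : Finset (Fin m)).image fun i =>
      s(((i.castSucc : Fin (m + 1)), (0 : Fin (n + 1))),
        ((i.succ : Fin (m + 1)), (0 : Fin (n + 1))))) ∪
    ((Finset.univ : Finset (Fin n)).image fun j =>
      s((Fin.last m, (j.castSucc : Fin (n + 1))),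
        (Fin.last m, (j.succ : Fin (n + 1)))))

/-- A vertex `v = (i, j)` is interior if `j ≥ 1` and `i ≤ m - 1`. -/
def Interior (m n : ℕ) (v : GridV m n) : Prop := v.1.val < m ∧ 1 ≤ v.2.val

/-- The finset of interior vertices. -/
def interiorFinset (m n : ℕ) : Finset (GridV m n) :=
  Finset.univ.filter fun v : GridV m n => v.1.val < m ∧ 1 ≤ v.2.val

/-- The edge to the right of `v` (for interior `v`, i.e. when `v.1 < m`). -/
def rightEdge (m n : ℕ) (v : GridV m n) : Sym2 (GridV m n) :=
  s(v, ((⟨min (v.1.val + 1) m, by omega⟩ : Fin (m + 1)), v.2))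

/-- The edge below `v` (for interior `v`, i.e. when `v.2 ≥ 1`). -/
def belowEdge (m n : ℕ) (v : GridV m n) : Sym2 (GridV m n) :=
  s(v, (v.1, (⟨v.2.val - 1, lt_of_le_of_lt (Nat.sub_le _ _) v.2.isLt⟩ : Fin (n + 1))))

/-- The pair `E_v` of candidate edges at an interior vertex `v`: the edge to the right of
`v` and the edge below `v`. -/
def Ev (m n : ℕ) (v : GridV m n) : Finset (Sym2 (GridV m n)) :=
  {rightEdge m n v, belowEdge m n v}



lemma mem_boundaryB {m n : ℕ} {e : Sym2 (GridV m n)} :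
    e ∈ boundaryB m n ↔
      (∃ i : Fin m, e = s(((i.castSucc : Fin (m+1)), (0 : Fin (n+1))),
        ((i.succ : Fin (m+1)), (0 : Fin (n+1))))) ∨
      (∃ j : Fin n, e = s((Fin.last m, (j.castSucc : Fin (n+1))),
        (Fin.last m, (j.succ : Fin (n+1))))) := by
  simp [boundaryB, eq_comm]

lemma rightEdge_ne_belowEdge {m n : ℕ} {v : GridV m n} (hv : Interior m n v) :
    rightEdge m n v ≠ belowEdge m n v := by
  obtain ⟨h1, h2⟩ := hv
  simp only [true_and, and_true, rightEdge, belowEdge, ne_eq, Sym2.eq_iff, Prod.ext_iff, Fin.ext_iff]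
  omega

lemma Ev_card {m n : ℕ} {v : GridV m n} (hv : Interior m n v) : (Ev m n v).card = 2 := by
  rw [Ev, Finset.card_insert_of_notMem (by simpa using rightEdge_ne_belowEdge hv),
    Finset.card_singleton]

lemma mem_Ev {m n : ℕ} {v : GridV m n} {e : Sym2 (GridV m n)} :
    e ∈ Ev m n v ↔ e = rightEdge m n v ∨ e = belowEdge m n v := by
  simp [Ev]

lemma boundary_not_mem_Ev {m n : ℕ} {v : GridV m n} (hv : Interior m n v)
    {e : Sym2 (GridV m n)} (he : e ∈ boundaryB m n) : e ∉ Ev m n v := by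
  obtain ⟨h1, h2⟩ := hv
  intro hEv
  rcases mem_Ev.1 hEv with rfl | rfl <;>
    rcases mem_boundaryB.1 he with ⟨i, hi⟩ | ⟨j, hj⟩ <;>
  · first
    | (simp only [true_and, and_true, rightEdge, Sym2.eq_iff, Prod.ext_iff, Fin.ext_iff, Fin.coe_castSucc,
        Fin.val_succ, Fin.val_last, Fin.val_zero] at *; omega)
    | (simp only [true_and, and_true, belowEdge, Sym2.eq_iff, Prod.ext_iff, Fin.ext_iff, Fin.coe_castSucc,
        Fin.val_succ, Fin.val_last, Fin.val_zero] at *; omega)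

lemma Ev_disjoint {m n : ℕ} {v w : GridV m n} (hv : Interior m n v) (hw : Interior m n w)
    (hvw : v ≠ w) : Disjoint (Ev m n v) (Ev m n w) := by
  obtain ⟨h1, h2⟩ := hv
  obtain ⟨h3, h4⟩ := hw
  rw [Finset.disjoint_left]
  intro e hev hew
  apply hvw
  have : v.1.val = w.1.val ∧ v.2.val = w.2.val := by
    rcases mem_Ev.1 hev with rfl | rfl <;> rcases mem_Ev.1 hew with h | h <;>
      (simp only [true_and, and_true, rightEdge, belowEdge, Sym2.eq_iff, Prod.ext_iff, Fin.ext_iff] at h; omega)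
  exact Prod.ext (Fin.ext this.1) (Fin.ext this.2)

lemma covered {m n : ℕ} {e : Sym2 (GridV m n)} (he : e ∈ (gridL m n).edgeSet)
    (hB : e ∉ boundaryB m n) : ∃ v, Interior m n v ∧ e ∈ Ev m n v := by
  induction e using Sym2.ind with
  | _ a b =>
    rw [SimpleGraph.mem_edgeSet, gridL, SimpleGraph.fromRel_adj] at he
    obtain ⟨hne, hrel⟩ := he
    -- wlog: four cases
    rcases hrel with (⟨h1, h2⟩ | ⟨h1, h2⟩) | (⟨h1, h2⟩ | ⟨h1, h2⟩) <;>
      replace h1 := congrArg Fin.val h1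
    · -- vertical : a below b
      by_cases him : a.1.val = m
      · exfalso; apply hB
        rw [mem_boundaryB]
        right
        refine ⟨⟨a.2.val, by omega⟩, ?_⟩
        simp only [true_and, and_true, Sym2.eq_iff, Prod.ext_iff, Fin.ext_iff, Fin.coe_castSucc, Fin.val_succ,
          Fin.val_last]
        omega
      · refine ⟨b, ⟨by omega, by omega⟩, mem_Ev.2 (Or.inr ?_)⟩
        simp only [true_and, and_true, belowEdge, Sym2.eq_iff, Prod.ext_iff, Fin.ext_iff]
        omega
    · -- horizontal : a left of b
      by_cases hj0 : a.2.val = 0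
      · exfalso; apply hB
        rw [mem_boundaryB]
        left
        refine ⟨⟨a.1.val, by omega⟩, ?_⟩
        simp only [true_and, and_true, Sym2.eq_iff, Prod.ext_iff, Fin.ext_iff, Fin.coe_castSucc, Fin.val_succ,
          Fin.val_zero]
        omega
      · refine ⟨a, ⟨by omega, by omega⟩, mem_Ev.2 (Or.inl ?_)⟩
        simp only [true_and, and_true, rightEdge, Sym2.eq_iff, Prod.ext_iff, Fin.ext_iff]
        omega
    · by_cases him : b.1.val = m
      · exfalso; apply hB
        rw [mem_boundaryB]
        right
        refine ⟨⟨b.2.val, by omega⟩, ?_⟩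
        simp only [true_and, and_true, Sym2.eq_iff, Prod.ext_iff, Fin.ext_iff, Fin.coe_castSucc, Fin.val_succ,
          Fin.val_last]
        omega
      · refine ⟨a, ⟨by omega, by omega⟩, mem_Ev.2 (Or.inr ?_)⟩
        simp only [true_and, and_true, belowEdge, Sym2.eq_iff, Prod.ext_iff, Fin.ext_iff]
        omega
    · by_cases hj0 : b.2.val = 0
      · exfalso; apply hB
        rw [mem_boundaryB]
        left
        refine ⟨⟨b.1.val, by omega⟩, ?_⟩
        simp only [true_and, and_true, Sym2.eq_iff, Prod.ext_iff, Fin.ext_iff, Fin.coe_castSucc, Fin.val_succ,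
          Fin.val_zero]
        omega
      · refine ⟨b, ⟨by omega, by omega⟩, mem_Ev.2 (Or.inl ?_)⟩
        simp only [true_and, and_true, rightEdge, Sym2.eq_iff, Prod.ext_iff, Fin.ext_iff]
        omega

lemma mem_interiorFinset {m n : ℕ} {v : GridV m n} :
    v ∈ interiorFinset m n ↔ Interior m n v := by
  simp [interiorFinset, Interior]

lemma boundaryB_card {m n : ℕ} : (boundaryB m n).card = m + n := by
  rw [boundaryB, Finset.card_union_of_disjoint, Finset.card_image_of_injective,
    Finset.card_image_of_injective, Finset.card_univ, Finset.card_univ,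
    Fintype.card_fin, Fintype.card_fin]
  · intro j j' h
    simp only [true_and, and_true, Sym2.eq_iff, Prod.ext_iff, Fin.ext_iff, Fin.coe_castSucc,
      Fin.val_succ, Fin.val_last] at h
    exact Fin.ext (by omega)
  · intro i i' h
    simp only [true_and, and_true, Sym2.eq_iff, Prod.ext_iff, Fin.ext_iff, Fin.coe_castSucc,
      Fin.val_succ, Fin.val_zero] at h
    exact Fin.ext (by omega)
  · rw [Finset.disjoint_left]
    rintro e he he'
    simp only [Finset.mem_image, Finset.mem_univ, true_and] at he he'
    obtain ⟨i, rfl⟩ := he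
    obtain ⟨j, hj⟩ := he'
    have hi := i.isLt
    have hj' := j.isLt
    simp only [true_and, and_true, Sym2.eq_iff, Prod.ext_iff, Fin.ext_iff, Fin.coe_castSucc,
      Fin.val_succ, Fin.val_zero, Fin.val_last] at hj
    omega

lemma interiorFinset_card {m n : ℕ} : (interiorFinset m n).card = m * n := by
  have h1 : interiorFinset m n =
      (Finset.univ.filter fun i : Fin (m+1) => i.val < m) ×ˢ
        (Finset.univ.filter fun j : Fin (n+1) => 1 ≤ j.val) := by
    ext ⟨i, j⟩
    simp [interiorFinset]
  have h2 : (Finset.univ.filter fun i : Fin (m+1) => i.val < m) =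
      Finset.univ.erase (Fin.last m) := by
    ext i
    have := i.isLt
    simp only [Finset.mem_filter, Finset.mem_univ, true_and, Finset.mem_erase, and_true,
      ne_eq, Fin.ext_iff, Fin.val_last]
    omega
  have h3 : (Finset.univ.filter fun j : Fin (n+1) => 1 ≤ j.val) =
      Finset.univ.erase (0 : Fin (n+1)) := by
    ext j
    have := j.isLt
    simp only [Finset.mem_filter, Finset.mem_univ, true_and, Finset.mem_erase, and_true,
      ne_eq, Fin.ext_iff, Fin.val_zero]
    omega
  rw [h1, h2, h3, Finset.card_product, Finset.card_erase_of_mem (Finset.mem_univ _),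
    Finset.card_erase_of_mem (Finset.mem_univ _), Finset.card_univ, Finset.card_univ,
    Fintype.card_fin, Fintype.card_fin]
  simp

/-- The edge set `B ∪ {f(v) : v interior}` determined by a choice function `f`
(`f v = true` chooses the edge to the right of `v`, `f v = false` the edge below `v`). -/
def treeOf (m n : ℕ) (f : GridV m n → Bool) : Finset (Sym2 (GridV m n)) :=
  boundaryB m n ∪
    (interiorFinset m n).image fun v => if f v then rightEdge m n v else belowEdge m n v

/-- The collection `Γ̄` of all edge sets `B ∪ {f(v) : v interior}`. -/
def GammaBar (m n : ℕ) : Finset (Finset (Sym2 (GridV m n))) :=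
  (Finset.univ : Finset (GridV m n → Bool)).image (treeOf m n)

/-- if `T` is a spanning tree of the grid graph `L` that contains all
boundary edges but does not belong to `Γ̄`, then there are interior vertices `v*` and `v_*`
with `|T ∩ E_{v*}| = 2` and `|T ∩ E_{v_*}| = 0`. -/
theorem exists_double_and_empty_of_not_gammaBar (m n : ℕ) (hm : 1 ≤ m) (hn : 1 ≤ n)
    (T : Finset (Sym2 (GridV m n)))
    (hsub : (↑T : Set (Sym2 (GridV m n))) ⊆ (gridL m n).edgeSet)
    (hconn : (SimpleGraph.fromEdgeSet (↑T : Set (Sym2 (GridV m n)))).Connected)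
    (hacyc : (SimpleGraph.fromEdgeSet (↑T : Set (Sym2 (GridV m n)))).IsAcyclic)
    (hB : boundaryB m n ⊆ T) (hnot : T ∉ GammaBar m n) :
    ∃ v w : GridV m n, Interior m n v ∧ Interior m n w ∧
      (T ∩ Ev m n v).card = 2 ∧ (T ∩ Ev m n w).card = 0 := by
  classical
  set G := SimpleGraph.fromEdgeSet (↑T : Set (Sym2 (GridV m n))) with hG
  have hTree : G.IsTree := ⟨hconn, hacyc⟩
  have hEdge : G.edgeSet = (↑T : Set (Sym2 (GridV m n))) := by
    rw [hG, SimpleGraph.edgeSet_fromEdgeSet]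
    apply sdiff_eq_left.2
    rw [Set.disjoint_left]
    intro e heT hdiag
    exact ((gridL m n).not_isDiag_of_mem_edgeSet (hsub heT)) hdiag
  have hEF : G.edgeFinset = T := by
    ext e
    rw [SimpleGraph.mem_edgeFinset, hEdge]
    exact Finset.mem_coe
  have hTcard : T.card + 1 = (m + 1) * (n + 1) := by
    have := hTree.card_edgeFinset
    rwa [hEF, Fintype.card_prod, Fintype.card_fin, Fintype.card_fin] at this
  set I := interiorFinset m n with hI
  -- the sum of the local counts
  have hdisj : ∀ v ∈ I, ∀ w ∈ I, v ≠ w →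
      Disjoint (T ∩ Ev m n v) (T ∩ Ev m n w) := by
    intro v hv w hw hvw
    exact Finset.disjoint_of_subset_left Finset.inter_subset_right
      (Finset.disjoint_of_subset_right Finset.inter_subset_right
        (Ev_disjoint (mem_interiorFinset.1 hv) (mem_interiorFinset.1 hw) hvw))
  have hbi : I.biUnion (fun v => T ∩ Ev m n v) = T \ boundaryB m n := by
    ext e
    simp only [Finset.mem_biUnion, Finset.mem_sdiff, Finset.mem_inter]
    constructor
    · rintro ⟨v, hv, heT, heE⟩
      exact ⟨heT, fun hB' => boundary_not_mem_Ev (mem_interiorFinset.1 hv) hB' heE⟩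
    · rintro ⟨heT, heB⟩
      obtain ⟨v, hv, he⟩ := covered (hsub heT) heB
      exact ⟨v, mem_interiorFinset.2 hv, heT, he⟩
  have hsum : ∑ v ∈ I, (T ∩ Ev m n v).card = m * n := by
    rw [← Finset.card_biUnion hdisj, hbi, Finset.card_sdiff_of_subset hB, boundaryB_card]
    have : (m + 1) * (n + 1) = m * n + m + n + 1 := by ring
    omega
  have hle2 : ∀ v ∈ I, (T ∩ Ev m n v).card ≤ 2 := by
    intro v hv
    calc (T ∩ Ev m n v).card ≤ (Ev m n v).card :=
          Finset.card_le_card Finset.inter_subset_right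
      _ = 2 := Ev_card (mem_interiorFinset.1 hv)
  have hIcard : I.card = m * n := interiorFinset_card
  -- some vertex has count ≠ 1
  have hne1 : ∃ v ∈ I, (T ∩ Ev m n v).card ≠ 1 := by
    by_contra hall
    push_neg at hall
    apply hnot
    set f : GridV m n → Bool := fun v => decide (rightEdge m n v ∈ T) with hf
    have key : ∀ v ∈ I,
        T ∩ Ev m n v = {if f v then rightEdge m n v else belowEdge m n v} := by
      intro v hv
      obtain ⟨e, he⟩ := Finset.card_eq_one.1 (hall v hv)
      have heM : e ∈ T ∩ Ev m n v := he ▸ Finset.mem_singleton_self e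
      have heT : e ∈ T := Finset.mem_inter.1 heM |>.1
      rcases mem_Ev.1 (Finset.mem_inter.1 heM |>.2) with rfl | rfl
      · rw [he, if_pos (by simp [hf, heT])]
      · have hrT : rightEdge m n v ∉ T := by
          intro hrT
          have : rightEdge m n v ∈ T ∩ Ev m n v :=
            Finset.mem_inter.2 ⟨hrT, mem_Ev.2 (Or.inl rfl)⟩
          rw [he, Finset.mem_singleton] at this
          exact rightEdge_ne_belowEdge (mem_interiorFinset.1 hv) this
        rw [he, if_neg (by simp [hf, hrT])]
    rw [GammaBar, Finset.mem_image]
    refine ⟨f, Finset.mem_univ f, ?_⟩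
    apply Finset.Subset.antisymm
    · rw [treeOf]
      apply Finset.union_subset hB
      intro e he
      obtain ⟨v, hv, rfl⟩ := Finset.mem_image.1 he
      have : (if f v then rightEdge m n v else belowEdge m n v) ∈ T ∩ Ev m n v := by
        rw [key v hv]; exact Finset.mem_singleton_self _
      exact (Finset.mem_inter.1 this).1
    · intro e heT
      rw [treeOf, Finset.mem_union]
      by_cases heB : e ∈ boundaryB m n
      · exact Or.inl heB
      · right
        obtain ⟨v, hv, he⟩ := covered (hsub heT) heB
        have : e ∈ T ∩ Ev m n v := Finset.mem_inter.2 ⟨heT, he⟩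
        rw [key v (mem_interiorFinset.2 hv), Finset.mem_singleton] at this
        exact Finset.mem_image.2 ⟨v, mem_interiorFinset.2 hv, this.symm⟩
  obtain ⟨v₀, hv₀I, hv₀⟩ := hne1
  -- first find a vertex with count 2
  have h2 : ∃ v ∈ I, (T ∩ Ev m n v).card = 2 := by
    by_contra hno
    push_neg at hno
    have hle1 : ∀ v ∈ I, (T ∩ Ev m n v).card ≤ 1 := by
      intro v hv
      have := hle2 v hv
      have := hno v hv
      omega
    have hv₀0 : (T ∩ Ev m n v₀).card = 0 := by
      have := hle1 v₀ hv₀I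
      omega
    have hsum' : ∑ v ∈ I.erase v₀, (T ∩ Ev m n v).card + (T ∩ Ev m n v₀).card
        = ∑ v ∈ I, (T ∩ Ev m n v).card := Finset.sum_erase_add _ _ hv₀I
    have hbound : ∑ v ∈ I.erase v₀, (T ∩ Ev m n v).card ≤ (I.erase v₀).card := by
      calc ∑ v ∈ I.erase v₀, (T ∩ Ev m n v).card
          ≤ ∑ _v ∈ I.erase v₀, 1 :=
            Finset.sum_le_sum fun v hv => hle1 v (Finset.mem_of_mem_erase hv)
        _ = (I.erase v₀).card := by simp
    rw [Finset.card_erase_of_mem hv₀I, hIcard] at hbound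
    have hmn : 1 ≤ m * n := Nat.one_le_iff_ne_zero.2 (by positivity)
    omega
  obtain ⟨v₂, hv₂I, hv₂⟩ := h2
  -- then find a vertex with count 0
  have h0 : ∃ w ∈ I, (T ∩ Ev m n w).card = 0 := by
    by_contra hno
    push_neg at hno
    have hge1 : ∀ v ∈ I, 1 ≤ (T ∩ Ev m n v).card := by
      intro v hv
      have := hno v hv
      omega
    have hsum' : ∑ v ∈ I.erase v₂, (T ∩ Ev m n v).card + (T ∩ Ev m n v₂).card
        = ∑ v ∈ I, (T ∩ Ev m n v).card := Finset.sum_erase_add _ _ hv₂I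
    have hbound : (I.erase v₂).card ≤ ∑ v ∈ I.erase v₂, (T ∩ Ev m n v).card := by
      calc (I.erase v₂).card = ∑ _v ∈ I.erase v₂, 1 := by simp
        _ ≤ ∑ v ∈ I.erase v₂, (T ∩ Ev m n v).card :=
            Finset.sum_le_sum fun v hv => hge1 v (Finset.mem_of_mem_erase hv)
    rw [Finset.card_erase_of_mem hv₂I, hIcard] at hbound
    have hmn : 1 ≤ m * n := Nat.one_le_iff_ne_zero.2 (by positivity)
    omega
  obtain ⟨w₀, hw₀I, hw₀⟩ := h0
  exact ⟨v₂, w₀, mem_interiorFinset.1 hv₂I, mem_interiorFinset.1 hw₀I, hv₂, hw₀⟩
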